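/- Let l ∈ {K4, KD4, S4}, let φ be a modal formula, let s be a maximal state for l with respect to φ such that th(s) is complete for l, let d be a maximal state for l with respect to φ, and let ψ be a modal formula. If th(s) → ◇th(d) is valid for l, th(s) ↔ th(d) is not valid for l, and th(d) ∧ □ψ is satisfiable for l, then th(s) ∧ □(¬th(d) ∨ □ψ) is satisfiable for l. -/

import Mathlib

/-- Modal formulas in negation normal form, as in the paper:
φ ::= ⊥ | ⊤ | p | ¬p | φ∧φ | φ∨φ | □φ | ◇φ. -/
inductive Form : Type where
  | bot : Form
  | top : Form
  | pos : ℕ → Form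
  | npos : ℕ → Form
  | and : Form → Form → Form
  | or : Form → Form → Form
  | box : Form → Form
  | dia : Form → Form
deriving DecidableEq

namespace Form

/-- Negation, defined as usual (by De Morgan dualities). -/
def neg : Form → Form
  | bot => top
  | top => bot
  | pos p => npos p
  | npos p => pos p
  | and φ ψ => or φ.neg ψ.neg
  | or φ ψ => and φ.neg ψ.neg
  | box φ => dia φ.neg
  | dia φ => box φ.neg

/-- Implication φ → ψ, defined as usual. -/
def imp (φ ψ : Form) : Form := or φ.neg ψ

/-- Bi-implication φ ↔ ψ, defined as usual. -/
def biimp (φ ψ : Form) : Form := and (imp φ ψ) (imp ψ φ)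

/-- P(φ): the set of propositional variables occurring in φ. -/
def vars : Form → Finset ℕ
  | bot => ∅
  | top => ∅
  | pos p => {p}
  | npos p => {p}
  | and φ ψ => φ.vars ∪ ψ.vars
  | or φ ψ => φ.vars ∪ ψ.vars
  | box φ => φ.vars
  | dia φ => φ.vars

/-- Modal depth. -/
def md : Form → ℕ
  | bot => 0
  | top => 0
  | pos _ => 0
  | npos _ => 0
  | and φ ψ => max φ.md ψ.md
  | or φ ψ => max φ.md ψ.md
  | box φ => φ.md + 1
  | dia φ => φ.md + 1

/-- sub(φ): the set of subformulas of φ. -/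
def subf : Form → Finset Form
  | bot => {bot}
  | top => {top}
  | pos p => {pos p}
  | npos p => {npos p}
  | and φ ψ => insert (and φ ψ) (φ.subf ∪ ψ.subf)
  | or φ ψ => insert (or φ ψ) (φ.subf ∪ ψ.subf)
  | box φ => insert (box φ) φ.subf
  | dia φ => insert (dia φ) φ.subf

/-- s̄ub(φ) = sub(φ) ∪ {¬ψ : ψ ∈ sub(φ)}. -/
def subBar (φ : Form) : Finset Form := φ.subf ∪ φ.subf.image neg

/-- □^k φ : k nested boxes. -/
def boxIter : ℕ → Form → Form
  | 0, φ => φ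
  | n + 1, φ => box (boxIter n φ)

def isDia : Form → Bool
  | dia _ => true
  | _ => false

def isBox : Form → Bool
  | box _ => true
  | _ => false

end Form

/-- Big conjunction over a finite set of formulas (⋀∅ = ⊤). -/
noncomputable def bigAnd (s : Finset Form) : Form := s.toList.foldr Form.and Form.top

/-- Big disjunction over a finite set of formulas (⋁∅ = ⊥). -/
noncomputable def bigOr (s : Finset Form) : Form := s.toList.foldr Form.or Form.bot

/-- th(a) = ⋀ a. -/
noncomputable def th (a : Finset Form) : Form := bigAnd a

/-- A finite Kripke model: a nonempty finite set of states, an accessibility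
relation and a valuation. -/
structure Model : Type 1 where
  W : Type
  nonempty : Nonempty W
  finite : Finite W
  R : W → W → Prop
  V : W → Set ℕ

/-- Satisfaction M,w ⊨ φ. -/
def Model.sat (M : Model) : M.W → Form → Prop
  | _, .bot => False
  | _, .top => True
  | w, .pos p => p ∈ M.V w
  | w, .npos p => p ∉ M.V w
  | w, .and φ ψ => M.sat w φ ∧ M.sat w ψ
  | w, .or φ ψ => M.sat w φ ∨ M.sat w ψ
  | w, .box φ => ∀ v, M.R w v → M.sat v φ
  | w, .dia φ => ∃ v, M.R w v ∧ M.sat v φ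

/-- The six base logics K, D, T, K4, KD4, S4. -/
inductive BaseLogic : Type where
  | K | D | T | K4 | KD4 | S4
deriving DecidableEq

/-- A logic: a base logic, possibly extended by axiom 5. -/
structure Logic : Type where
  base : BaseLogic
  has5 : Bool
deriving DecidableEq

def Logic.K : Logic := ⟨.K, false⟩
def Logic.D : Logic := ⟨.D, false⟩
def Logic.T : Logic := ⟨.T, false⟩
def Logic.K4 : Logic := ⟨.K4, false⟩
def Logic.KD4 : Logic := ⟨.KD4, false⟩
def Logic.S4 : Logic := ⟨.S4, false⟩

/-- l + 5. -/
def BaseLogic.plus5 (b : BaseLogic) : Logic := ⟨b, true⟩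

/-- M is a model for the logic l (frame conditions). -/
def Model.IsFor (M : Model) (l : Logic) : Prop :=
  (match l.base with
    | .K => True
    | .D => ∀ w, ∃ v, M.R w v
    | .T => ∀ w, M.R w w
    | .K4 => ∀ a b c, M.R a b → M.R b c → M.R a c
    | .KD4 => (∀ w, ∃ v, M.R w v) ∧ (∀ a b c, M.R a b → M.R b c → M.R a c)
    | .S4 => (∀ w, M.R w w) ∧ (∀ a b c, M.R a b → M.R b c → M.R a c))
  ∧ (l.has5 = true → ∀ a b c, M.R a b → M.R a c → M.R b c)

/-- φ is satisfiable for l: satisfied at some state of some finite model for l. -/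
def Satisfiable (l : Logic) (φ : Form) : Prop :=
  ∃ M : Model, M.IsFor l ∧ ∃ w : M.W, M.sat w φ

/-- φ is valid for l: satisfied at every state of every finite model for l. -/
def Valid (l : Logic) (φ : Form) : Prop :=
  ∀ M : Model, M.IsFor l → ∀ w : M.W, M.sat w φ

/-- φ is complete for l: for every ψ ∈ L(P(φ)), φ→ψ or φ→¬ψ is valid for l. -/
def Complete (l : Logic) (φ : Form) : Prop :=
  ∀ ψ : Form, ψ.vars ⊆ φ.vars → (Valid l (φ.imp ψ) ∨ Valid l (φ.imp ψ.neg))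

/-- Z is a bisimulation modulo P from M to M'. -/
def IsBisim (P : Set ℕ) (M M' : Model) (Z : M.W → M'.W → Prop) : Prop :=
  (∃ s s', Z s s') ∧
  ∀ s s', Z s s' →
    (M.V s ∩ P = M'.V s' ∩ P) ∧
    (∀ t, M.R s t → ∃ t', M'.R s' t' ∧ Z t t') ∧
    (∀ t', M'.R s' t' → ∃ t, M.R s t ∧ Z t t')

/-- (M,a) ∼_P (M',a'). -/
def Bisimilar (P : Set ℕ) (M : Model) (a : M.W) (M' : Model) (a' : M'.W) : Prop :=
  ∃ Z, IsBisim P M M' Z ∧ Z a a'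

/-- (M,a) ≡_P (M',a'): the two pointed models satisfy the same formulas of L(P). -/
def EquivP (P : Set ℕ) (M : Model) (a : M.W) (M' : Model) (a' : M'.W) : Prop :=
  ∀ φ : Form, ↑φ.vars ⊆ P → (M.sat a φ ↔ M'.sat a' φ)

/-- (M,s) is flat (for base logic l, with axiom 5): the carrier is {s}∪W and
R = R1 ∪ R2 with R1 ⊆ {s}×W, R2 an equivalence relation on W, and s ∈ W if
l ∈ {T,S4}. -/
def Flat (l : BaseLogic) (M : Model) (s : M.W) : Prop :=
  ∃ W : Set M.W, (∀ w, w = s ∨ w ∈ W) ∧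
    ∃ R1 R2 : M.W → M.W → Prop,
      (∀ x y, M.R x y ↔ (R1 x y ∨ R2 x y)) ∧
      (∀ x y, R1 x y → x = s ∧ y ∈ W) ∧
      (∀ x y, R2 x y → x ∈ W ∧ y ∈ W) ∧
      (∀ x ∈ W, R2 x x) ∧
      (∀ x y, R2 x y → R2 y x) ∧
      (∀ x y z, R2 x y → R2 y z → R2 x z) ∧
      ((l = .T ∨ l = .S4) → s ∈ W)

/-- A maximal state for l with respect to φ: a maximally l-consistent subset
of s̄ub(φ). -/
def MaxState (l : Logic) (φ : Form) (a : Finset Form) : Prop :=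
  a ⊆ φ.subBar ∧ Satisfiable l (th a) ∧ ∀ ψ ∈ φ.subf, ψ ∈ a ∨ ψ.neg ∈ a

/-- D(x) = {◇ψ : ◇ψ ∈ x}. -/
def DSet (x : Finset Form) : Finset Form := x.filter (fun ψ => ψ.isDia = true)

/-- B(x) = {□ψ : □ψ ∈ x}. -/
def BSet (x : Finset Form) : Finset Form := x.filter (fun ψ => ψ.isBox = true)

/-- A view: a parent-state and a finite set of children-states. -/
structure View : Type where
  parent : Finset Form
  children : Finset (Finset Form)

/-- The view is with respect to φ: all its states are subsets of s̄ub(φ). -/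
def View.WF (φ : Form) (S : View) : Prop :=
  S.parent ⊆ φ.subBar ∧ ∀ c ∈ S.children, c ⊆ φ.subBar

/-- A set of formulas is l-closed. -/
def LClosed (l : Logic) (P : Finset ℕ) (s : Finset Form) : Prop :=
  (∀ φ1 φ2 : Form, Form.and φ1 φ2 ∈ s → φ1 ∈ s ∧ φ2 ∈ s) ∧
  (∀ φ1 φ2 : Form, Form.or φ1 φ2 ∈ s → φ1 ∈ s ∨ φ2 ∈ s) ∧
  ((l.base = .T ∨ l.base = .S4) → ∀ ψ : Form, Form.box ψ ∈ s → ψ ∈ s) ∧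
  (∀ p ∈ P, Form.pos p ∈ s ∨ Form.npos p ∈ s)

/-- The view S is l-complete. -/
def ViewLComplete (l : Logic) (P : Finset ℕ) (S : View) : Prop :=
  LClosed l P S.parent ∧
  (∀ c ∈ S.children, LClosed l P c) ∧
  (∀ ψ : Form, Form.dia ψ ∈ S.parent → ∃ c ∈ S.children, ψ ∈ c) ∧
  (∀ ψ : Form, Form.box ψ ∈ S.parent → ∀ c ∈ S.children, ψ ∈ c) ∧
  ((l.base = .K4 ∨ l.base = .KD4 ∨ l.base = .S4) →
    ∀ ψ : Form, Form.box ψ ∈ S.parent → ∀ c ∈ S.children, Form.box ψ ∈ c) ∧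
  (l.base = .KD4 → S.children.Nonempty)

/-- The view S is consistent for l: every one of its states is consistent. -/
def ViewConsistent (l : Logic) (S : View) : Prop :=
  Satisfiable l (th S.parent) ∧ ∀ c ∈ S.children, Satisfiable l (th c)

/-- d = max{md(th(c')) : c' ∈ C(S)}. -/
noncomputable def childDepth (S : View) : ℕ := S.children.sup (fun c => (th c).md)

/-- A K-maximal child-state: a maximally K-consistent subset of s̄ub_d(φ). -/
def KMaxChild (φ : Form) (d : ℕ) (c : Finset Form) : Prop :=
  c ⊆ φ.subBar.filter (fun ψ => ψ.md ≤ d) ∧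
  Satisfiable Logic.K (th c) ∧
  ∀ ψ ∈ φ.subf, ψ.md ≤ d → (ψ ∈ c ∨ ψ.neg ∈ c)

/-- S' completes S (for logic l, with respect to φ). -/
def ViewCompletes (l : Logic) (φ : Form) (S' S : View) : Prop :=
  ViewLComplete l φ.vars S' ∧
  S.parent ⊆ S'.parent ∧
  (∀ a ∈ S.children, ∃ a' ∈ S'.children, a ⊆ a') ∧
  (l.base = .K → ∀ a' ∈ S'.children, KMaxChild φ (childDepth S') a') ∧
  (l.base ≠ .K → ∀ a' ∈ S'.children, MaxState l φ a')

/-- The depth-0 normal form ⋀_{p∈S} p ∧ ⋀_{p∈P∖S} ¬p. -/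
noncomputable def nf0 (P S : Finset ℕ) : Form :=
  Form.and (bigAnd (S.image Form.pos)) (bigAnd ((P \ S).image Form.npos))

/-- Fine's normal forms F_P^d. -/
noncomputable def NF (P : Finset ℕ) : ℕ → Set Form
  | 0 => { χ | ∃ S ⊆ P, χ = nf0 P S }
  | d + 1 => { χ | ∃ S : Finset Form, ↑S ⊆ NF P d ∧ ∃ S0 ⊆ P,
      χ = Form.and (nf0 P S0)
            (Form.and (bigAnd (S.image Form.dia)) (Form.box (bigOr S))) }

/-- φ is complete up to its depth for l. -/
def CompleteUpToDepth (l : Logic) (φ : Form) : Prop :=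
  ∀ ψ : Form, ψ.vars ⊆ φ.vars → ψ.md ≤ φ.md →
    (Valid l (φ.imp ψ) ∨ Valid l (φ.imp ψ.neg))

namespace Stmt13Aux

lemma neg_neg (α : Form) : α.neg.neg = α := by
  induction α <;> simp [Form.neg, *]

lemma sat_neg (M : Model) : ∀ (α : Form) (w : M.W), M.sat w α.neg ↔ ¬ M.sat w α := by
  intro α
  induction α with
  | bot => intro w; simp [Form.neg, Model.sat]
  | top => intro w; simp [Form.neg, Model.sat]
  | pos p => intro w; simp [Form.neg, Model.sat]
  | npos p => intro w; simp [Form.neg, Model.sat]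
  | and α β ih1 ih2 => intro w; simp only [Form.neg, Model.sat, ih1, ih2]; tauto
  | or α β ih1 ih2 => intro w; simp only [Form.neg, Model.sat, ih1, ih2]; tauto
  | box α ih =>
      intro w; simp only [Form.neg, Model.sat, ih]; push_neg; tauto
  | dia α ih =>
      intro w; simp only [Form.neg, Model.sat, ih]; push_neg; tauto

lemma sat_foldr (M : Model) (w : M.W) (L : List Form) :
    M.sat w (L.foldr Form.and Form.top) ↔ ∀ α ∈ L, M.sat w α := by
  induction L with
  | nil => simp [Model.sat]
  | cons a t ih => simp [Model.sat, ih]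

lemma sat_th (M : Model) (w : M.W) (a : Finset Form) :
    M.sat w (th a) ↔ ∀ α ∈ a, M.sat w α := by
  simp [th, bigAnd, sat_foldr]

lemma mem_subf_self (α : Form) : α ∈ α.subf := by
  cases α <;> simp [Form.subf]

lemma subf_trans : ∀ φ α : Form, α ∈ φ.subf → α.subf ⊆ φ.subf := by
  intro φ
  induction φ with
  | bot => intro α h; simp [Form.subf] at h; subst h; simp [Form.subf]
  | top => intro α h; simp [Form.subf] at h; subst h; simp [Form.subf]
  | pos p => intro α h; simp [Form.subf] at h; subst h; simp [Form.subf]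
  | npos p => intro α h; simp [Form.subf] at h; subst h; simp [Form.subf]
  | and φ1 φ2 ih1 ih2 =>
      intro α h
      simp only [Form.subf, Finset.mem_insert, Finset.mem_union] at h
      rcases h with rfl | h | h
      · exact Finset.Subset.refl _
      · exact Finset.Subset.trans (ih1 α h) (by intro x hx; simp [Form.subf, Finset.mem_union, hx])
      · exact Finset.Subset.trans (ih2 α h) (by intro x hx; simp [Form.subf, Finset.mem_union, hx])
  | or φ1 φ2 ih1 ih2 =>
      intro α h
      simp only [Form.subf, Finset.mem_insert, Finset.mem_union] at h
      rcases h with rfl | h | h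
      · exact Finset.Subset.refl _
      · exact Finset.Subset.trans (ih1 α h) (by intro x hx; simp [Form.subf, Finset.mem_union, hx])
      · exact Finset.Subset.trans (ih2 α h) (by intro x hx; simp [Form.subf, Finset.mem_union, hx])
  | box φ1 ih =>
      intro α h
      simp only [Form.subf, Finset.mem_insert] at h
      rcases h with rfl | h
      · exact Finset.Subset.refl _
      · exact Finset.Subset.trans (ih α h) (by intro x hx; simp [Form.subf, hx])
  | dia φ1 ih =>
      intro α h
      simp only [Form.subf, Finset.mem_insert] at h
      rcases h with rfl | h
      · exact Finset.Subset.refl _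
      · exact Finset.Subset.trans (ih α h) (by intro x hx; simp [Form.subf, hx])

lemma neg_subf (α : Form) : α.neg.subf = α.subf.image Form.neg := by
  induction α <;>
    simp [Form.neg, Form.subf, Finset.image_insert, Finset.image_union, *]

lemma subBar_closed {φ α : Form} (h : α ∈ φ.subBar) : α.subf ⊆ φ.subBar := by
  simp only [Form.subBar, Finset.mem_union, Finset.mem_image] at h
  rcases h with h | ⟨ξ, hξ, rfl⟩
  · intro β hβ
    exact Finset.mem_union_left _ (subf_trans φ α h hβ)
  · intro β hβ
    rw [neg_subf] at hβ
    obtain ⟨η, hη, rfl⟩ := Finset.mem_image.1 hβ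
    exact Finset.mem_union_right _
      (Finset.mem_image_of_mem _ (subf_trans φ ξ hξ hη))

lemma maxstate_decides {l : Logic} {φ : Form} {d : Finset Form}
    (hd : MaxState l φ d) {χ : Form} (hχ : χ ∈ φ.subBar) :
    χ ∈ d ∨ χ.neg ∈ d := by
  simp only [Form.subBar, Finset.mem_union, Finset.mem_image] at hχ
  rcases hχ with h | ⟨ξ, hξ, rfl⟩
  · exact hd.2.2 χ h
  · rcases hd.2.2 ξ hξ with h | h
    · right; rw [neg_neg]; exact h
    · left; exact h

lemma mem_of_sat {l : Logic} {φ : Form} {d : Finset Form}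
    (hd : MaxState l φ d) {χ : Form} (hχ : χ ∈ φ.subBar)
    {M : Model} {p : M.W} (hp : M.sat p (th d)) (hpc : M.sat p χ) : χ ∈ d := by
  rcases maxstate_decides hd hχ with h | h
  · exact h
  · exact absurd hpc ((sat_neg M χ p).1 ((sat_th M p d).1 hp _ h))

def glueR (N M : Model) (bad : N.W → Prop) (b : M.W) :
    ({x : N.W // ¬ bad x} ⊕ M.W) → ({x : N.W // ¬ bad x} ⊕ M.W) → Prop
  | Sum.inl x, Sum.inl x' => N.R x.1 x'.1
  | Sum.inl x, Sum.inr y => (∃ u, bad u ∧ N.R x.1 u) ∧ (y = b ∨ M.R b y)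
  | Sum.inr y, Sum.inr y' => M.R y y'
  | Sum.inr _, Sum.inl _ => False

noncomputable def glue (N M : Model) (bad : N.W → Prop) (b : M.W) : Model where
  W := {x : N.W // ¬ bad x} ⊕ M.W
  nonempty := ⟨Sum.inr (Classical.choice M.nonempty)⟩
  finite := by haveI := N.finite; haveI := M.finite; infer_instance
  R := glueR N M bad b
  V := Sum.elim (fun x => N.V x.1) M.V

lemma glue_sat_inr (N M : Model) (bad : N.W → Prop) (b : M.W) :
    ∀ (α : Form) (y : M.W),
      (glue N M bad b).sat (Sum.inr y) α ↔ M.sat y α := by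
  intro α
  induction α with
  | bot => intro y; simp [Model.sat]
  | top => intro y; simp [Model.sat]
  | pos p => intro y; simp [Model.sat, glue]
  | npos p => intro y; simp [Model.sat, glue]
  | and α β ih1 ih2 => intro y; simp only [Model.sat, ih1, ih2]
  | or α β ih1 ih2 => intro y; simp only [Model.sat, ih1, ih2]
  | box χ ih =>
      intro y
      simp only [Model.sat]
      constructor
      · intro h v hv
        exact (ih v).1 (h (Sum.inr v) hv)
      · rintro h (u | v) hv
        · exact (show False from hv).elim
        · exact (ih v).2 (h v hv)
  | dia χ ih =>
      intro y
      simp only [Model.sat]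
      constructor
      · rintro ⟨(u | v), hv, hs⟩
        · exact (show False from hv).elim
        · exact ⟨v, hv, (ih v).1 hs⟩
      · rintro ⟨v, hv, hs⟩
        exact ⟨Sum.inr v, hv, (ih v).2 hs⟩

lemma glue_sat_inl {l : Logic} {φ : Form} {d : Finset Form} (hd : MaxState l φ d)
    (N M : Model) (b : M.W) (hb : M.sat b (th d))
    (hNt : ∀ a b c, N.R a b → N.R b c → N.R a c)
    (hMt : ∀ a b c, M.R a b → M.R b c → M.R a c) :
    ∀ α : Form, α ∈ φ.subBar →
      ∀ x : {x : N.W // ¬ N.sat x (th d)},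
        N.sat x.1 α ↔
          (glue N M (fun u => N.sat u (th d)) b).sat (Sum.inl x) α := by
  intro α
  induction α with
  | bot => intro _ x; simp [Model.sat]
  | top => intro _ x; simp [Model.sat]
  | pos p => intro _ x; simp [Model.sat, glue]
  | npos p => intro _ x; simp [Model.sat, glue]
  | and α β ih1 ih2 =>
      intro hm x
      have h1 := ih1 (subBar_closed hm (by simp [Form.subf, mem_subf_self])) x
      have h2 := ih2 (subBar_closed hm (by simp [Form.subf, mem_subf_self])) x
      simp only [Model.sat, h1, h2]
  | or α β ih1 ih2 =>
      intro hm x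
      have h1 := ih1 (subBar_closed hm (by simp [Form.subf, mem_subf_self])) x
      have h2 := ih2 (subBar_closed hm (by simp [Form.subf, mem_subf_self])) x
      simp only [Model.sat, h1, h2]
  | box χ ih =>
      intro hm x
      have hχm : χ ∈ φ.subBar :=
        subBar_closed hm (by simp [Form.subf, mem_subf_self])
      simp only [Model.sat]
      constructor
      · rintro h (u | y) hv
        · exact (ih hχm u).1 (h u.1 hv)
        · obtain ⟨⟨u0, hu0bad, hu0R⟩, hy⟩ := hv
          have hu0χ : N.sat u0 χ := h u0 hu0R
          have hχd : χ ∈ d := mem_of_sat hd hχm hu0bad hu0χ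
          rcases hy with rfl | hby
          · exact (glue_sat_inr N M _ y χ y).2 ((sat_th M y d).1 hb χ hχd)
          · have hboxd : Form.box χ ∈ d := by
              apply mem_of_sat hd hm hu0bad
              intro z hz
              exact h z (hNt _ _ _ hu0R hz)
            have hbbox : M.sat b (Form.box χ) := (sat_th M b d).1 hb _ hboxd
            exact (glue_sat_inr N M _ b χ y).2 (hbbox y hby)
      · intro h u hu
        by_cases hbad : N.sat u (th d)
        · have hRb : glueR N M (fun u => N.sat u (th d)) b
              (Sum.inl x) (Sum.inr b) := ⟨⟨u, hbad, hu⟩, Or.inl rfl⟩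
          have hbχ : M.sat b χ := (glue_sat_inr N M _ b χ b).1 (h (Sum.inr b) hRb)
          exact (sat_th N u d).1 hbad χ (mem_of_sat hd hχm hb hbχ)
        · exact (ih hχm ⟨u, hbad⟩).2 (h (Sum.inl ⟨u, hbad⟩) hu)
  | dia χ ih =>
      intro hm x
      have hχm : χ ∈ φ.subBar :=
        subBar_closed hm (by simp [Form.subf, mem_subf_self])
      simp only [Model.sat]
      constructor
      · rintro ⟨u, hu, huχ⟩
        by_cases hbad : N.sat u (th d)
        · have hχd : χ ∈ d := mem_of_sat hd hχm hbad huχ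
          exact ⟨Sum.inr b, ⟨⟨u, hbad, hu⟩, Or.inl rfl⟩,
            (glue_sat_inr N M _ b χ b).2 ((sat_th M b d).1 hb χ hχd)⟩
        · exact ⟨Sum.inl ⟨u, hbad⟩, hu, (ih hχm ⟨u, hbad⟩).1 huχ⟩
      · rintro ⟨(u | y), hv, hsat⟩
        · exact ⟨u.1, hv, (ih hχm u).2 hsat⟩
        · obtain ⟨⟨u0, hu0bad, hu0R⟩, hy⟩ := hv
          have hyχ : M.sat y χ := (glue_sat_inr N M _ b χ y).1 hsat
          rcases hy with rfl | hby
          · exact ⟨u0, hu0R, (sat_th N u0 d).1 hu0bad χ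
              (mem_of_sat hd hχm hb hyχ)⟩
          · have hbdia : M.sat b (Form.dia χ) := ⟨y, hby, hyχ⟩
            have hdd : Form.dia χ ∈ d := mem_of_sat hd hm hb hbdia
            have hu0d : N.sat u0 (Form.dia χ) := (sat_th N u0 d).1 hu0bad _ hdd
            obtain ⟨v, hv2, hvχ⟩ := hu0d
            exact ⟨v, hNt _ _ _ hu0R hv2, hvχ⟩

lemma valid_biimp_self (l : Logic) (θ : Form) : Valid l (θ.biimp θ) := by
  intro Mo hMo w
  rcases Classical.em (Mo.sat w θ) with h | h
  · exact ⟨Or.inr h, Or.inr h⟩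
  · exact ⟨Or.inl ((sat_neg Mo θ w).2 h), Or.inl ((sat_neg Mo θ w).2 h)⟩

end Stmt13Aux

open Stmt13Aux

/-- for l ∈ {K4,KD4,S4}, maximal states s (with th(s) complete)
and d, and a formula ψ: if th(s)→◇th(d) is valid, th(s)↔th(d) is not valid,
and th(d)∧□ψ is satisfiable, then th(s)∧□(¬th(d)∨□ψ) is satisfiable. -/
theorem stmt13 (l : Logic) (hl : l = Logic.K4 ∨ l = Logic.KD4 ∨ l = Logic.S4)
    (φ ψ : Form) (s d : Finset Form)
    (hs : MaxState l φ s) (hd : MaxState l φ d)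
    (hscomp : Complete l (th s))
    (h1 : Valid l ((th s).imp (Form.dia (th d))))
    (h2 : ¬ Valid l ((th s).biimp (th d)))
    (h3 : Satisfiable l (Form.and (th d) (Form.box ψ))) :
    Satisfiable l (Form.and (th s) (Form.box (Form.or (th d).neg (Form.box ψ)))) := by
    classical
  obtain ⟨N, hNfor, w, hw⟩ := hs.2.1
  obtain ⟨M, hMfor, b, hbw⟩ := h3
  have hb : M.sat b (th d) := hbw.1
  have hbψ : M.sat b (Form.box ψ) := hbw.2
  have hNt : ∀ a b c, N.R a b → N.R b c → N.R a c := by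
    rcases hl with rfl | rfl | rfl
    · exact hNfor.1
    · exact hNfor.1.2
    · exact hNfor.1.2
  have hMt : ∀ a b c, M.R a b → M.R b c → M.R a c := by
    rcases hl with rfl | rfl | rfl
    · exact hMfor.1
    · exact hMfor.1.2
    · exact hMfor.1.2
  have hsd : s ≠ d := by
    rintro rfl; exact h2 (valid_biimp_self l (th s))
  obtain ⟨α₀, hα₀s, hα₀d⟩ : ∃ α₀, α₀ ∈ s ∧ α₀.neg ∈ d := by
    by_contra hc
    push_neg at hc
    apply hsd
    apply Finset.ext
    intro α
    constructor
    · intro hαs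
      rcases maxstate_decides hd (hs.1 hαs) with h | h
      · exact h
      · exact absurd h (hc α hαs)
    · intro hαd
      rcases maxstate_decides hs (hd.1 hαd) with h | h
      · exact h
      · exact absurd (by rwa [neg_neg]) (hc α.neg h)
  have hwkept : ¬ N.sat w (th d) := by
    intro hbadw
    exact (sat_neg N α₀ w).1 ((sat_th N w d).1 hbadw _ hα₀d)
      ((sat_th N w s).1 hw α₀ hα₀s)
  set bad : N.W → Prop := fun u => N.sat u (th d) with hbaddef
  set O : Model := glue N M bad b with hOdef
  have hOt : ∀ a c e, O.R a c → O.R c e → O.R a e := by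
    rintro (x | y) (x' | y') (x'' | y'') h1 h2
    · exact hNt _ _ _ h1 h2
    · obtain ⟨⟨u, hu, hR⟩, hc⟩ := h2
      exact ⟨⟨u, hu, hNt _ _ _ h1 hR⟩, hc⟩
    · exact (show False from h2).elim
    · obtain ⟨he, hy⟩ := h1
      refine ⟨he, ?_⟩
      rcases hy with rfl | hby
      · exact Or.inr h2
      · exact Or.inr (hMt _ _ _ hby h2)
    · exact (show False from h1).elim
    · exact (show False from h1).elim
    · exact (show False from h2).elim
    · exact hMt _ _ _ h1 h2
  have hOfor : O.IsFor l := by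
    rcases hl with rfl | rfl | rfl
    · exact ⟨hOt, by intro h; exact absurd h (by decide)⟩
    · refine ⟨⟨?_, hOt⟩, by intro h; exact absurd h (by decide)⟩
      rintro (x | y)
      · obtain ⟨v, hv⟩ := hNfor.1.1 x.1
        by_cases hbad : bad v
        · exact ⟨Sum.inr b, ⟨⟨v, hbad, hv⟩, Or.inl rfl⟩⟩
        · exact ⟨Sum.inl ⟨v, hbad⟩, hv⟩
      · obtain ⟨v, hv⟩ := hMfor.1.1 y
        exact ⟨Sum.inr v, hv⟩
    · refine ⟨⟨?_, hOt⟩, by intro h; exact absurd h (by decide)⟩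
      rintro (x | y)
      · exact hNfor.1.1 x.1
      · exact hMfor.1.1 y
  refine ⟨O, hOfor, Sum.inl ⟨w, hwkept⟩, ?_, ?_⟩
  · refine (sat_th O _ s).2 ?_
    intro α hα
    exact (glue_sat_inl hd N M b hb hNt hMt α (hs.1 hα) ⟨w, hwkept⟩).1
      ((sat_th N w s).1 hw α hα)
  · rintro (u | y) hv
    · refine Or.inl ((sat_neg O (th d) (Sum.inl u)).2 ?_)
      intro hcontra
      exact u.2 ((sat_th N u.1 d).2 (fun α hα =>
        (glue_sat_inl hd N M b hb hNt hMt α (hd.1 hα) u).2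
          ((sat_th O (Sum.inl u) d).1 hcontra α hα)))
    · refine Or.inr ((glue_sat_inr N M bad b (Form.box ψ) y).2 ?_)
      obtain ⟨_, hy⟩ := hv
      rcases hy with rfl | hby
      · exact hbψ
      · intro z hz
        exact hbψ z (hMt _ _ _ hby hz)
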